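/- For any null set E ⊆ ℝ × (0,π), any R > 0, and the map φ : ℝ²×(0,π) → ℝ×(0,π), φ(x₀,y₀,θ) = (x₀ − y₀ cot θ, θ), the set φ⁻¹(E) ∩ ([−R,R]²×(0,π)) has Lebesgue measure zero. -/

import Mathlib

open MeasureTheory Real

/-- For any null set `E ⊆ ℝ × (0,π)` and any `R > 0`, the preimage of `E` under
`φ(x₀,y₀,θ) = (x₀ − y₀ cot θ, θ)`, intersected with `[−R,R]² × (0,π)`, is null. -/
theorem preimage_of_null_line_set_is_null
    (E : Set (ℝ × ℝ)) (hE : E ⊆ Set.univ ×ˢ Set.Ioo 0 π) (hE0 : volume E = 0)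
    (R : ℝ) (hR : 0 < R) :
    volume {p : ℝ × ℝ × ℝ |
      p.1 ∈ Set.Icc (-R) R ∧ p.2.1 ∈ Set.Icc (-R) R ∧ p.2.2 ∈ Set.Ioo 0 π ∧
      (p.1 - p.2.1 * (Real.cos p.2.2 / Real.sin p.2.2), p.2.2) ∈ E} = 0 := by
  set F := toMeasurable volume E with hFdef
  have hFm : MeasurableSet F := measurableSet_toMeasurable _ _
  have hF0 : volume F = 0 := by rw [hFdef, measure_toMeasurable]; exact hE0
  have hEF : E ⊆ F := subset_toMeasurable _ _
  set f : ℝ × ℝ → ℝ := fun q => q.1 * (Real.cos q.2 / Real.sin q.2) with hfdef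
  have hfm : Measurable f :=
    measurable_fst.mul
      ((Real.measurable_cos.comp measurable_snd).div (Real.measurable_sin.comp measurable_snd))
  set A : Set (ℝ × ℝ × ℝ) := {p | (p.1 - f p.2, p.2.2) ∈ F} with hAdef
  have hAm : MeasurableSet A := by
    have hm : Measurable fun p : ℝ × ℝ × ℝ => (p.1 - f p.2, p.2.2) :=
      (measurable_fst.sub (hfm.comp measurable_snd)).prodMk measurable_snd.snd
    exact hm hFm
  have hsub : {p : ℝ × ℝ × ℝ |
      p.1 ∈ Set.Icc (-R) R ∧ p.2.1 ∈ Set.Icc (-R) R ∧ p.2.2 ∈ Set.Ioo 0 π ∧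
      (p.1 - p.2.1 * (Real.cos p.2.2 / Real.sin p.2.2), p.2.2) ∈ E} ⊆ A :=
    fun p hp => hEF hp.2.2.2
  refine measure_mono_null hsub ?_
  -- a.e. θ-slice of F is null
  have hswap0 : (volume : Measure (ℝ × ℝ)) (Prod.swap ⁻¹' F) = 0 := by
    rw [show (volume : Measure (ℝ × ℝ)) = (volume : Measure ℝ).prod volume from rfl] at hF0 ⊢
    rw [Measure.measurePreserving_swap.measure_preimage hFm.nullMeasurableSet]
    exact hF0
  have hae : ∀ᵐ θ : ℝ, volume {x : ℝ | (x, θ) ∈ F} = 0 := by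
    have := (Measure.measure_prod_null (μ := (volume : Measure ℝ)) (ν := (volume : Measure ℝ))
      (hFm.preimage measurable_swap)).mp hswap0
    filter_upwards [this] with θ hθ
    convert hθ using 2 <;> rfl
  -- transfer to the product ℝ × ℝ via snd
  have haeprod : ∀ᵐ q : ℝ × ℝ, volume {x : ℝ | (x, q.2) ∈ F} = 0 := by
    have hq : Measure.QuasiMeasurePreserving (Prod.snd : ℝ × ℝ → ℝ)
        ((volume : Measure ℝ).prod volume) volume :=
      Measure.quasiMeasurePreserving_snd
    exact hq.ae hae
  -- compute the measure of A via Fubini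
  rw [show (volume : Measure (ℝ × ℝ × ℝ)) = (volume : Measure ℝ).prod volume from rfl]
  rw [Measure.prod_apply_symm hAm]
  have hzero : (fun q : ℝ × ℝ => volume ((fun x => (x, q)) ⁻¹' A)) =ᵐ[volume] 0 := by
    filter_upwards [haeprod] with q hq
    have hsec : ((fun x => (x, q)) ⁻¹' A) = (fun x : ℝ => x + (- f q)) ⁻¹' {x : ℝ | (x, q.2) ∈ F} := by
      ext x
      simp [hAdef, sub_eq_add_neg]
    rw [hsec, measure_preimage_add_right]
    exact hq
  rw [lintegral_congr_ae hzero]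
  simp
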